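/- For every n-tuple of points x_1,...,x_n in a metric space, every ε ∈ (0,1), and every r > 0 such that each x_i has at least n^ε indices j with d(x_i, x_j) ≤ r, if n·(1 - n^{ε-1})^{⌊n^{1-ε} log² n⌋} < 1 then there exists a multiset S of ⌊n^{1-ε} log² n⌋ points of the tuple such that every x_i is within distance r of some point of S. -/
import Mathlib


open Finset

/-- Existence of good seeds: if every point of the tuple has at least `n^ε` points
of the tuple within distance `r`, and `n (1 - n^{ε-1})^m < 1` with
`m = ⌊n^{1-ε} log² n⌋`, then there is a multiset of `m` points of the tuple such
that every point of the tuple is within distance `r` of one of them. -/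
theorem stmt8 {Y : Type*} [MetricSpace Y] (n : ℕ) (x : Fin n → Y)
    (ε r : ℝ) (hε0 : 0 < ε) (hε1 : ε < 1) (hr : 0 < r)
    (hdense : ∀ i, (n : ℝ) ^ ε ≤
      ((univ.filter fun j => dist (x i) (x j) ≤ r).card : ℝ))
    (m : ℕ) (hm : m = ⌊(n : ℝ) ^ (1 - ε) * Real.log n ^ 2⌋₊)
    (hsmall : (n : ℝ) * (1 - (n : ℝ) ^ (ε - 1)) ^ m < 1) :
    ∃ S : Fin m → Fin n, ∀ i, ∃ k, dist (x i) (x (S k)) ≤ r := by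
  rcases Nat.eq_zero_or_pos n with hn | hn
  · subst hn
    have hm0 : m = 0 := by simp [hm, Real.log_zero]
    subst hm0
    exact ⟨Fin.elim0, fun i => i.elim0⟩
  have hn0 : (0:ℝ) < n := by exact_mod_cast hn
  have hn1 : (1:ℝ) ≤ n := by exact_mod_cast hn
  set B : Fin n → Finset (Fin n) := fun i => univ.filter fun j => dist (x i) (x j) ≤ r with hB
  set bad : Finset (Fin m → Fin n) :=
    univ.filter fun S => ∃ i, ∀ k, ¬ dist (x i) (x (S k)) ≤ r with hbaddef
  have hsub : bad ⊆ univ.biUnion fun i => Fintype.piFinset fun _ : Fin m => (B i)ᶜ := by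
    intro S hS
    simp only [hbaddef, mem_filter, mem_univ, true_and] at hS
    obtain ⟨i, hi⟩ := hS
    refine mem_biUnion.mpr ⟨i, mem_univ i, ?_⟩
    rw [Fintype.mem_piFinset]
    intro k
    simp only [mem_compl, hB, mem_filter, mem_univ, true_and]
    exact hi k
  have hnε : (n:ℝ) - (n:ℝ) ^ ε = n * (1 - (n:ℝ) ^ (ε - 1)) := by
    have h1 : (n:ℝ) * (n:ℝ) ^ (ε - 1) = (n:ℝ) ^ ε := by
      have h1 : (n:ℝ) ^ ((1:ℝ) + (ε - 1)) = (n:ℝ) ^ (1:ℝ) * (n:ℝ) ^ (ε - 1) :=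
        Real.rpow_add hn0 _ _
      rw [Real.rpow_one, show (1:ℝ) + (ε - 1) = ε by ring] at h1
      exact h1.symm
    rw [mul_sub, mul_one, h1]
  have h2 : ∀ i : Fin n, (((B i)ᶜ.card : ℝ)) ^ m ≤ ((n:ℝ) * (1 - (n:ℝ) ^ (ε - 1))) ^ m := by
    intro i
    apply pow_le_pow_left₀ (by positivity)
    have hc : (B i)ᶜ.card = n - (B i).card := by
      rw [card_compl, Fintype.card_fin]
    have hBn : (B i).card ≤ n := by
      simpa using card_le_card (subset_univ (B i))
    rw [hc, ← hnε, Nat.cast_sub hBn]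
    have := hdense i
    simp only [hB]
    linarith [hdense i]
  have hbadcard : (bad.card : ℝ) < ((univ : Finset (Fin m → Fin n)).card : ℝ) := by
    have h1 : bad.card ≤ ∑ i : Fin n, ((B i)ᶜ.card) ^ m := by
      calc bad.card ≤ (univ.biUnion fun i => Fintype.piFinset fun _ : Fin m => (B i)ᶜ).card :=
            card_le_card hsub
        _ ≤ ∑ i : Fin n, (Fintype.piFinset fun _ : Fin m => (B i)ᶜ).card := card_biUnion_le
        _ = ∑ i : Fin n, ((B i)ᶜ.card) ^ m := by
            simp [Fintype.card_piFinset, Finset.prod_const]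
    calc (bad.card : ℝ) ≤ ∑ i : Fin n, (((B i)ᶜ.card : ℝ)) ^ m := by exact_mod_cast h1
      _ ≤ ∑ i : Fin n, ((n:ℝ) * (1 - (n:ℝ) ^ (ε - 1))) ^ m :=
          Finset.sum_le_sum fun i _ => h2 i
      _ = n * ((n:ℝ) * (1 - (n:ℝ) ^ (ε - 1))) ^ m := by
          simp [Finset.sum_const, card_univ, nsmul_eq_mul]
      _ = (n:ℝ) ^ m * ((n:ℝ) * (1 - (n:ℝ) ^ (ε - 1)) ^ m) := by rw [mul_pow]; ring
      _ < (n:ℝ) ^ m * 1 := by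
          exact mul_lt_mul_of_pos_left hsmall (by positivity)
      _ = ((univ : Finset (Fin m → Fin n)).card : ℝ) := by
          rw [mul_one, card_univ, Fintype.card_fun, Fintype.card_fin, Fintype.card_fin]
          push_cast
          ring
  have hne : bad ≠ univ := by
    intro h
    rw [h] at hbadcard
    exact lt_irrefl _ hbadcard
  obtain ⟨S, hS⟩ : ∃ S, S ∉ bad := by
    by_contra hall
    push_neg at hall
    exact hne (eq_univ_iff_forall.mpr hall)
  refine ⟨S, ?_⟩
  simp only [hbaddef, mem_filter, mem_univ, true_and, not_exists, not_forall, not_not] at hS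
  exact hS
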